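/- Strict dissipativity plus exponential reachability implies the time-varying measure turnpike property (Proposition 2): In the DHN optimal control setting, let z̄ be a bounded reference pair and assume: (i) strict dissipativity with respect to z̄, i.e., there exist a class-K function α, s ≥ 0 and S : [0,∞) × ℝⁿ → [s, ∞) with sup_{x₀ ∈ X₀} S(0, x₀) < ∞, such that for all x₀ ∈ X₀, all T ≥ 0 and all optimal pairs z*_T of OCP_T(x₀): S(T, x*_T(T)) − S(0, x₀) ≤ ∫₀^T [ℓ_{z̄}(τ, z*_T(τ)) − α(‖z*_T(τ) − z̄(τ)‖)] dτ; (ii) exponential reachability of z̄: there exist c₁, c₂ > 0 (independent of x₀) such that for every x₀ ∈ X₀ there is an admissible infinite-horizon pair (x, u) satisfying the dynamics with x(0) = x₀ and ‖(x(τ), u(τ)) − z̄(τ)‖ ≤ c₁ e^{−c₂ τ} for all τ ≥ 0. Then there exists a function ν : (0,∞) → [0,∞) such that for all x₀ ∈ X₀, all T > 0, all optimal pairs z*_T of OCP_T(x₀) and all ε > 0: μ(Θ_T(ε)) ≤ ν(ε) < ∞. -/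

import Mathlib

open MeasureTheory NormedSpace
open scoped Matrix

/-- The data of the district-heating-network (DHN) optimal control setting:
dynamics `ẋ = A x + B u + E d`, control constraint box
`U = ∏ᵢ [umin i, umax i]`, stage cost
`ℓ(τ,x,u) = ½ xᵀQx + uᵀSx + xᵀ r(τ) + uᵀ p(τ)`, and a compact set `X₀`
of initial conditions; `d, r, p` are measurable and bounded on `[0,∞)`. -/
structure DHNSetting (n m w : ℕ) where
  A : Matrix (Fin n) (Fin n) ℝ
  B : Matrix (Fin n) (Fin m) ℝ
  E : Matrix (Fin n) (Fin w) ℝ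
  d : ℝ → Fin w → ℝ
  d_meas : Measurable d
  d_bdd : ∃ C, ∀ τ : ℝ, 0 ≤ τ → ‖d τ‖ ≤ C
  umin : Fin m → ℝ
  umax : Fin m → ℝ
  u_lt : ∀ i, umin i < umax i
  Q : Matrix (Fin n) (Fin n) ℝ
  Q_symm : Q.IsSymm
  S : Matrix (Fin m) (Fin n) ℝ
  r : ℝ → Fin n → ℝ
  r_meas : Measurable r
  r_bdd : ∃ C, ∀ τ : ℝ, 0 ≤ τ → ‖r τ‖ ≤ C
  p : ℝ → Fin m → ℝ
  p_meas : Measurable p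
  p_bdd : ∃ C, ∀ τ : ℝ, 0 ≤ τ → ‖p τ‖ ≤ C
  X₀ : Set (Fin n → ℝ)
  X₀_compact : IsCompact X₀

namespace DHNSetting

variable {n m w : ℕ} (P : DHNSetting n m w)

/-- The control constraint box `U = ∏ᵢ [umin i, umax i] ⊂ ℝᵐ`. -/
def U : Set (Fin m → ℝ) := {u | ∀ i, u i ∈ Set.Icc (P.umin i) (P.umax i)}

/-- The stage cost `ℓ(τ,x,u) = ½ xᵀQx + uᵀSx + xᵀ r(τ) + uᵀ p(τ)`. -/
noncomputable def ell (τ : ℝ) (x : Fin n → ℝ) (u : Fin m → ℝ) : ℝ :=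
  (1 / 2) * (x ⬝ᵥ P.Q.mulVec x) + (u ⬝ᵥ P.S.mulVec x) + (x ⬝ᵥ P.r τ) + (u ⬝ᵥ P.p τ)

/-- The state trajectory of `ẋ = A x + B u + E d`, `x(0) = x₀`, given by the
variation-of-constants formula. -/
noncomputable def traj (u : ℝ → Fin m → ℝ) (x₀ : Fin n → ℝ) (t : ℝ) : Fin n → ℝ :=
  (exp (t • P.A)).mulVec x₀ +
    ∫ s in (0:ℝ)..t,
      (exp ((t - s) • P.A)).mulVec (P.B.mulVec (u s) + P.E.mulVec (P.d s))

/-- A control is admissible on `[0,T]` if it is measurable and takes values in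
`U` almost everywhere on `[0,T]`. -/
def Admissible (T : ℝ) (u : ℝ → Fin m → ℝ) : Prop :=
  Measurable u ∧ ∀ᵐ τ ∂(volume.restrict (Set.Icc (0:ℝ) T)), u τ ∈ P.U

/-- The cost functional `J_T(x₀, u) = ∫₀^T ℓ(τ, x_u(τ; x₀), u(τ)) dτ`. -/
noncomputable def cost (T : ℝ) (x₀ : Fin n → ℝ) (u : ℝ → Fin m → ℝ) : ℝ :=
  ∫ τ in (0:ℝ)..T, P.ell τ (P.traj u x₀ τ) (u τ)

/-- A control is optimal for `OCP_T(x₀)` if it is admissible and minimizes the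
cost functional over all admissible controls. -/
def IsOptimal (T : ℝ) (x₀ : Fin n → ℝ) (u : ℝ → Fin m → ℝ) : Prop :=
  P.Admissible T u ∧ ∀ u', P.Admissible T u' → P.cost T x₀ u ≤ P.cost T x₀ u'

/-- A reference pair `z̄ = (x̄, ū)` is an admissible infinite-horizon pair
satisfying the dynamics. -/
def IsReferencePair (xbar : ℝ → Fin n → ℝ) (ubar : ℝ → Fin m → ℝ) : Prop :=
  Measurable ubar ∧ (∀ τ : ℝ, 0 ≤ τ → ubar τ ∈ P.U) ∧
    ∀ t : ℝ, 0 ≤ t → xbar t = P.traj ubar (xbar 0) t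

end DHNSetting

/-- A class-K function: continuous, strictly increasing on `[0,∞)`, `α 0 = 0`. -/
def IsClassK (α : ℝ → ℝ) : Prop :=
  ContinuousOn α (Set.Ici 0) ∧ StrictMonoOn α (Set.Ici 0) ∧ α 0 = 0

section Helpers
set_option maxHeartbeats 1000000

noncomputable def matC {k l : ℕ} (M : Matrix (Fin k) (Fin l) ℝ) : ℝ := ∑ i, ∑ j, |M i j|

lemma matC_nonneg {k l : ℕ} (M : Matrix (Fin k) (Fin l) ℝ) : 0 ≤ matC M := by
  unfold matC; positivity

lemma norm_mulVec_le {k l : ℕ} (M : Matrix (Fin k) (Fin l) ℝ) (v : Fin l → ℝ) :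
    ‖M.mulVec v‖ ≤ matC M * ‖v‖ := by
  rw [pi_norm_le_iff_of_nonneg (mul_nonneg (matC_nonneg M) (norm_nonneg v))]
  intro i
  rw [Matrix.mulVec, dotProduct]
  calc ‖∑ j, M i j * v j‖ ≤ ∑ j, |M i j * v j| := by
        simpa [Real.norm_eq_abs] using Finset.abs_sum_le_sum_abs (fun j => M i j * v j) Finset.univ
    _ ≤ ∑ j, |M i j| * ‖v‖ := by
        refine Finset.sum_le_sum fun j _ => ?_
        rw [abs_mul]
        exact mul_le_mul_of_nonneg_left (norm_le_pi_norm v j) (abs_nonneg _)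
    _ = (∑ j, |M i j|) * ‖v‖ := by rw [Finset.sum_mul]
    _ ≤ matC M * ‖v‖ := by
        refine mul_le_mul_of_nonneg_right ?_ (norm_nonneg _)
        exact Finset.single_le_sum (f := fun i => ∑ j, |M i j|) (fun i _ => by positivity)
          (Finset.mem_univ i)

lemma abs_dot_le {k : ℕ} (x v : Fin k → ℝ) : |x ⬝ᵥ v| ≤ (k : ℝ) * ‖x‖ * ‖v‖ := by
  rw [dotProduct]
  calc |∑ i, x i * v i| ≤ ∑ i, |x i * v i| := Finset.abs_sum_le_sum_abs _ _
    _ ≤ ∑ _i : Fin k, ‖x‖ * ‖v‖ := by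
        refine Finset.sum_le_sum fun i _ => ?_
        rw [abs_mul]
        exact mul_le_mul (norm_le_pi_norm x i) (norm_le_pi_norm v i) (abs_nonneg _) (norm_nonneg _)
    _ = (k : ℝ) * ‖x‖ * ‖v‖ := by simp [mul_assoc]

lemma dot_abs_le' {k : ℕ} (x v : Fin k → ℝ) {dx dv : ℝ} (hx : ‖x‖ ≤ dx) (hv : ‖v‖ ≤ dv) :
    |x ⬝ᵥ v| ≤ (k : ℝ) * dx * dv := by
  have h0x : (0:ℝ) ≤ dx := (norm_nonneg x).trans hx
  have h0v : (0:ℝ) ≤ dv := (norm_nonneg v).trans hv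
  calc |x ⬝ᵥ v| ≤ (k : ℝ) * ‖x‖ * ‖v‖ := abs_dot_le x v
    _ ≤ (k : ℝ) * dx * dv := by
        apply mul_le_mul (mul_le_mul_of_nonneg_left hx (Nat.cast_nonneg k)) hv (norm_nonneg v)
        positivity

lemma dot_mulVec_abs_le {k l : ℕ} (a : Fin k → ℝ) (M : Matrix (Fin k) (Fin l) ℝ) (y : Fin l → ℝ)
    {da dy : ℝ} (ha : ‖a‖ ≤ da) (hy : ‖y‖ ≤ dy) :
    |a ⬝ᵥ M.mulVec y| ≤ (k : ℝ) * matC M * da * dy := by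
  have h0a : (0:ℝ) ≤ da := (norm_nonneg a).trans ha
  have h0y : (0:ℝ) ≤ dy := (norm_nonneg y).trans hy
  have hMn := matC_nonneg M
  have h1 : |a ⬝ᵥ M.mulVec y| ≤ (k : ℝ) * da * (matC M * dy) :=
    dot_abs_le' a (M.mulVec y) ha ((norm_mulVec_le M y).trans
      (mul_le_mul_of_nonneg_left hy hMn))
  calc |a ⬝ᵥ M.mulVec y| ≤ (k : ℝ) * da * (matC M * dy) := h1
    _ = (k : ℝ) * matC M * da * dy := by ring

lemma aemeas_dot {X : Type*} [MeasurableSpace X] {μ : Measure X} {k : ℕ} {x y : X → Fin k → ℝ}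
    (hx : AEMeasurable x μ) (hy : AEMeasurable y μ) :
    AEMeasurable (fun t => x t ⬝ᵥ y t) μ := by
  simp only [dotProduct]
  exact Finset.aemeasurable_fun_sum _ fun i _ =>
    ((measurable_pi_apply i).comp_aemeasurable hx).mul
      ((measurable_pi_apply i).comp_aemeasurable hy)

lemma meas_mulVec' {X : Type*} [MeasurableSpace X] {k l : ℕ}
    {M : X → Matrix (Fin k) (Fin l) ℝ} {f : X → Fin l → ℝ}
    (hM : ∀ i j, Measurable (fun t => M t i j)) (hf : Measurable f) :
    Measurable fun t => (M t).mulVec (f t) := by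
  rw [measurable_pi_iff]
  intro i
  simp only [Matrix.mulVec, dotProduct]
  exact Finset.measurable_sum _ fun j _ =>
    ((hM i j).mul ((measurable_pi_apply j).comp hf))

lemma contExp {k : ℕ} (A : Matrix (Fin k) (Fin k) ℝ) :
    Continuous fun t : ℝ => exp (t • A) := by
  letI : SeminormedRing (Matrix (Fin k) (Fin k) ℝ) := Matrix.linftyOpSemiNormedRing
  letI : NormedRing (Matrix (Fin k) (Fin k) ℝ) := Matrix.linftyOpNormedRing
  letI : NormedAlgebra ℝ (Matrix (Fin k) (Fin k) ℝ) := Matrix.linftyOpNormedAlgebra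
  letI : NormedAlgebra ℚ (Matrix (Fin k) (Fin k) ℝ) := .restrictScalars ℚ ℝ _
  exact exp_continuous.comp (continuous_id.smul continuous_const)

lemma traj_eq_aux {k : ℕ} (A : Matrix (Fin k) (Fin k) ℝ) (g : ℝ → Fin k → ℝ) (t : ℝ)
    (hg : IntervalIntegrable (fun s => (exp ((-s) • A)).mulVec (g s)) volume 0 t) :
    (∫ s in (0:ℝ)..t, (exp ((t - s) • A)).mulVec (g s)) =
      (exp (t • A)).mulVec (∫ s in (0:ℝ)..t, (exp ((-s) • A)).mulVec (g s)) := by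
  have h1 : ∀ s, (exp ((t - s) • A)).mulVec (g s)
      = (exp (t • A)).mulVec ((exp ((-s) • A)).mulVec (g s)) := by
    intro s
    rw [Matrix.mulVec_mulVec, ← Matrix.exp_add_of_commute _ _
      (((Commute.refl A).smul_left t).smul_right (-s))]
    rw [sub_smul, neg_smul, sub_eq_add_neg]
  simp_rw [h1]
  set L := (Matrix.mulVecLin (exp (t • A))).toContinuousLinearMap with hL
  have := L.intervalIntegral_comp_comm hg
  simpa [hL, Matrix.mulVecLin] using this

lemma ell_split {n m w : ℕ} (P : DHNSetting n m w) (τ : ℝ) (x x' : Fin n → ℝ)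
    (u u' : Fin m → ℝ) :
    P.ell τ x u - P.ell τ x' u' =
      (1/2) * ((x - x') ⬝ᵥ P.Q.mulVec x + x' ⬝ᵥ P.Q.mulVec (x - x'))
      + ((u - u') ⬝ᵥ P.S.mulVec x + u' ⬝ᵥ P.S.mulVec (x - x'))
      + (x - x') ⬝ᵥ P.r τ + (u - u') ⬝ᵥ P.p τ := by
  simp only [DHNSetting.ell, sub_dotProduct, Matrix.mulVec_sub, dotProduct_sub]
  ring

lemma ell_diff_le {n m w : ℕ} (P : DHNSetting n m w) (τ : ℝ)
    (x x' : Fin n → ℝ) (u u' : Fin m → ℝ) {M Cr Cp : ℝ}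
    (hx : ‖x‖ ≤ M) (hx' : ‖x'‖ ≤ M) (hu : ‖u‖ ≤ M) (hu' : ‖u'‖ ≤ M)
    (hr : ‖P.r τ‖ ≤ Cr) (hp : ‖P.p τ‖ ≤ Cp) :
    P.ell τ x u - P.ell τ x' u' ≤
      ((n:ℝ) * matC P.Q * M + 2 * ((m:ℝ) * matC P.S * M) + (n:ℝ) * Cr + (m:ℝ) * Cp)
        * ‖(x - x', u - u')‖ := by
  set δ := ‖(x - x', u - u')‖ with hδ
  have hδx : ‖x - x'‖ ≤ δ := norm_fst_le (x - x', u - u')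
  have hδu : ‖u - u'‖ ≤ δ := norm_snd_le (x - x', u - u')
  have b1 : (x - x') ⬝ᵥ P.Q.mulVec x ≤ (n:ℝ) * matC P.Q * δ * M :=
    (le_abs_self _).trans (dot_mulVec_abs_le _ _ _ hδx hx)
  have b2 : x' ⬝ᵥ P.Q.mulVec (x - x') ≤ (n:ℝ) * matC P.Q * M * δ :=
    (le_abs_self _).trans (dot_mulVec_abs_le _ _ _ hx' hδx)
  have b3 : (u - u') ⬝ᵥ P.S.mulVec x ≤ (m:ℝ) * matC P.S * δ * M :=
    (le_abs_self _).trans (dot_mulVec_abs_le _ _ _ hδu hx)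
  have b4 : u' ⬝ᵥ P.S.mulVec (x - x') ≤ (m:ℝ) * matC P.S * M * δ :=
    (le_abs_self _).trans (dot_mulVec_abs_le _ _ _ hu' hδx)
  have b5 : (x - x') ⬝ᵥ P.r τ ≤ (n:ℝ) * δ * Cr :=
    (le_abs_self _).trans (dot_abs_le' _ _ hδx hr)
  have b6 : (u - u') ⬝ᵥ P.p τ ≤ (m:ℝ) * δ * Cp :=
    (le_abs_self _).trans (dot_abs_le' _ _ hδu hp)
  rw [ell_split]
  linarith

lemma abs_ell_le {n m w : ℕ} (P : DHNSetting n m w) (τ : ℝ)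
    (x : Fin n → ℝ) (u : Fin m → ℝ) {Mx Mu Cr Cp : ℝ}
    (hx : ‖x‖ ≤ Mx) (hu : ‖u‖ ≤ Mu) (hr : ‖P.r τ‖ ≤ Cr) (hp : ‖P.p τ‖ ≤ Cp) :
    |P.ell τ x u| ≤ (n:ℝ) * matC P.Q * Mx * Mx + (m:ℝ) * matC P.S * Mu * Mx
      + (n:ℝ) * Mx * Cr + (m:ℝ) * Mu * Cp := by
  have b1 : |x ⬝ᵥ P.Q.mulVec x| ≤ (n:ℝ) * matC P.Q * Mx * Mx := dot_mulVec_abs_le _ _ _ hx hx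
  have b2 : |u ⬝ᵥ P.S.mulVec x| ≤ (m:ℝ) * matC P.S * Mu * Mx := dot_mulVec_abs_le _ _ _ hu hx
  have b3 : |x ⬝ᵥ P.r τ| ≤ (n:ℝ) * Mx * Cr := dot_abs_le' _ _ hx hr
  have b4 : |u ⬝ᵥ P.p τ| ≤ (m:ℝ) * Mu * Cp := dot_abs_le' _ _ hu hp
  have h0 : |P.ell τ x u| ≤ |(1/2) * (x ⬝ᵥ P.Q.mulVec x)| + |u ⬝ᵥ P.S.mulVec x|
      + |x ⬝ᵥ P.r τ| + |u ⬝ᵥ P.p τ| := by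
    unfold DHNSetting.ell
    have a1 := abs_add_le ((1/2) * (x ⬝ᵥ P.Q.mulVec x) + u ⬝ᵥ P.S.mulVec x + x ⬝ᵥ P.r τ)
      (u ⬝ᵥ P.p τ)
    have a2 := abs_add_le ((1/2) * (x ⬝ᵥ P.Q.mulVec x) + u ⬝ᵥ P.S.mulVec x) (x ⬝ᵥ P.r τ)
    have a3 := abs_add_le ((1/2) * (x ⬝ᵥ P.Q.mulVec x)) (u ⬝ᵥ P.S.mulVec x)
    linarith
  have h2 : |(1/2) * (x ⬝ᵥ P.Q.mulVec x)| ≤ (n:ℝ) * matC P.Q * Mx * Mx := by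
    rw [abs_mul]
    calc |(1/2 : ℝ)| * |x ⬝ᵥ P.Q.mulVec x| ≤ 1 * |x ⬝ᵥ P.Q.mulVec x| := by
          apply mul_le_mul_of_nonneg_right _ (abs_nonneg _)
          rw [abs_of_pos] <;> norm_num
      _ = |x ⬝ᵥ P.Q.mulVec x| := one_mul _
      _ ≤ _ := b1
  linarith

/-- Bound on elements of the control box. -/
lemma norm_le_of_memU {n m w : ℕ} (P : DHNSetting n m w) {v : Fin m → ℝ} (hv : v ∈ P.U) :
    ‖v‖ ≤ max ‖P.umin‖ ‖P.umax‖ := by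
  rw [pi_norm_le_iff_of_nonneg (le_max_of_le_left (norm_nonneg _))]
  intro i
  have h := hv i
  rw [Set.mem_Icc] at h
  have h1 : |v i| ≤ max |P.umin i| |P.umax i| := abs_le_max_abs_abs h.1 h.2
  exact h1.trans (max_le_max (norm_le_pi_norm P.umin i) (norm_le_pi_norm P.umax i))

/-- Integrability of the inner integrand of `traj`. -/
lemma traj_integrand_integrableOn {n m w : ℕ} (P : DHNSetting n m w)
    {u : ℝ → Fin m → ℝ} (hu : Measurable u) {T CU : ℝ} (hT : 0 ≤ T) (hCU0 : 0 ≤ CU)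
    (hub : ∀ᵐ τ ∂(MeasureTheory.volume.restrict (Set.Icc (0:ℝ) T)), ‖u τ‖ ≤ CU) :
    MeasureTheory.IntegrableOn
      (fun s => (exp ((-s) • P.A)).mulVec (P.B.mulVec (u s) + P.E.mulVec (P.d s)))
      (Set.Icc 0 T) MeasureTheory.volume := by
  obtain ⟨Cd, hCd⟩ := P.d_bdd
  have hCd0 : 0 ≤ Cd := (norm_nonneg _).trans (hCd 0 le_rfl)
  -- measurability
  have hgmeas : Measurable fun s => P.B.mulVec (u s) + P.E.mulVec (P.d s) :=
    (meas_mulVec' (M := fun _ => P.B) (fun i j => measurable_const) hu).add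
      (meas_mulVec' (M := fun _ => P.E) (fun i j => measurable_const) P.d_meas)
  have hEmeas : ∀ i j, Measurable fun s : ℝ => exp ((-s) • P.A) i j := fun i j =>
    ((continuous_apply j).comp ((continuous_apply i).comp
      ((contExp P.A).comp continuous_neg))).measurable
  have hmeas : Measurable
      (fun s => (exp ((-s) • P.A)).mulVec (P.B.mulVec (u s) + P.E.mulVec (P.d s))) :=
    meas_mulVec' hEmeas hgmeas
  -- bound on the exponential factor
  have hcont : ContinuousOn (fun s : ℝ => matC (exp ((-s) • P.A))) (Set.Icc 0 T) := by
    apply Continuous.continuousOn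
    unfold matC
    refine continuous_finset_sum _ fun i _ => continuous_finset_sum _ fun j _ => ?_
    exact (Continuous.abs (by
      have := (contExp P.A).comp continuous_neg
      exact (((continuous_apply j).comp ((continuous_apply i).comp this)))))
  obtain ⟨CE, hCE⟩ := (isCompact_Icc).exists_bound_of_continuousOn hcont
  have hCE' : ∀ s ∈ Set.Icc (0:ℝ) T, matC (exp ((-s) • P.A)) ≤ CE := fun s hs =>
    (le_abs_self _).trans (hCE s hs)
  have hCE0 : 0 ≤ CE := (matC_nonneg _).trans (hCE' 0 ⟨le_rfl, hT⟩)
  -- conclude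
  refine MeasureTheory.Integrable.mono'
    (g := fun _ => CE * (matC P.B * CU + matC P.E * Cd))
    ((MeasureTheory.integrableOn_const_iff).mpr (Or.inr measure_Icc_lt_top))
    hmeas.aestronglyMeasurable ?_
  filter_upwards [hub, MeasureTheory.ae_restrict_mem measurableSet_Icc] with s hsu hs
  have h1 : ‖P.B.mulVec (u s) + P.E.mulVec (P.d s)‖ ≤ matC P.B * CU + matC P.E * Cd := by
    refine (norm_add_le _ _).trans (add_le_add ?_ ?_)
    · exact (norm_mulVec_le _ _).trans (mul_le_mul_of_nonneg_left hsu (matC_nonneg _))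
    · exact (norm_mulVec_le _ _).trans
        (mul_le_mul_of_nonneg_left (hCd s hs.1) (matC_nonneg _))
  calc ‖(exp ((-s) • P.A)).mulVec (P.B.mulVec (u s) + P.E.mulVec (P.d s))‖
      ≤ matC (exp ((-s) • P.A)) * ‖P.B.mulVec (u s) + P.E.mulVec (P.d s)‖ :=
        norm_mulVec_le _ _
    _ ≤ CE * (matC P.B * CU + matC P.E * Cd) := by
        refine mul_le_mul (hCE' s hs) h1 (norm_nonneg _) hCE0
    _ = CE * (matC P.B * CU + matC P.E * Cd) := rfl

/-- The state trajectory is continuous on `[0, T]` for an a.e.-bounded measurable control. -/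
lemma traj_contOn {n m w : ℕ} (P : DHNSetting n m w)
    {u : ℝ → Fin m → ℝ} (hu : Measurable u) {T CU : ℝ} (hT : 0 ≤ T) (hCU0 : 0 ≤ CU)
    (hub : ∀ᵐ τ ∂(MeasureTheory.volume.restrict (Set.Icc (0:ℝ) T)), ‖u τ‖ ≤ CU)
    (x₀ : Fin n → ℝ) : ContinuousOn (P.traj u x₀) (Set.Icc 0 T) := by
  set g : ℝ → Fin n → ℝ := fun s => P.B.mulVec (u s) + P.E.mulVec (P.d s) with hg
  set h : ℝ → Fin n → ℝ := fun s => (exp ((-s) • P.A)).mulVec (g s) with hh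
  have hInt : MeasureTheory.IntegrableOn h (Set.Icc 0 T) MeasureTheory.volume :=
    traj_integrand_integrableOn P hu hT hCU0 hub
  set F : ℝ → Fin n → ℝ := fun t => ∫ s in (0:ℝ)..t, h s with hF
  have hFc : ContinuousOn F (Set.Icc 0 T) := by
    have := intervalIntegral.continuousOn_primitive_interval
      (f := h) (μ := MeasureTheory.volume) (a := 0) (b := T)
      (by rwa [Set.uIcc_of_le hT])
    rwa [Set.uIcc_of_le hT] at this
  have hEq : Set.EqOn (P.traj u x₀)
      (fun t => (exp (t • P.A)).mulVec x₀ + (exp (t • P.A)).mulVec (F t))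
      (Set.Icc 0 T) := by
    intro t ht
    have hII : IntervalIntegrable h MeasureTheory.volume 0 t := by
      have h1 : MeasureTheory.IntegrableOn h (Set.Icc 0 t) MeasureTheory.volume :=
        hInt.mono_set (Set.Icc_subset_Icc_right ht.2)
      rw [← Set.uIcc_of_le ht.1] at h1
      exact h1.intervalIntegrable
    show (exp (t • P.A)).mulVec x₀ + _ = _
    rw [traj_eq_aux P.A g t hII]
  refine ContinuousOn.congr ?_ hEq
  refine ContinuousOn.add (((contExp P.A).matrix_mulVec continuous_const).continuousOn) ?_
  have hcm : Continuous fun q : Matrix (Fin n) (Fin n) ℝ × (Fin n → ℝ) => q.1.mulVec q.2 :=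
    continuous_fst.matrix_mulVec continuous_snd
  exact hcm.comp_continuousOn ((contExp P.A).continuousOn.prodMk hFc)

/-- Integrability of the stage cost along an a.e.-bounded trajectory/control. -/
lemma ell_integrableOn {n m w : ℕ} (P : DHNSetting n m w) {T : ℝ} (hT : 0 ≤ T)
    {x : ℝ → Fin n → ℝ} {u : ℝ → Fin m → ℝ}
    (hx : AEMeasurable x (MeasureTheory.volume.restrict (Set.Icc (0:ℝ) T)))
    (hu : AEMeasurable u (MeasureTheory.volume.restrict (Set.Icc (0:ℝ) T)))
    {Mx Mu : ℝ}
    (hxb : ∀ᵐ τ ∂(MeasureTheory.volume.restrict (Set.Icc (0:ℝ) T)), ‖x τ‖ ≤ Mx)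
    (hub : ∀ᵐ τ ∂(MeasureTheory.volume.restrict (Set.Icc (0:ℝ) T)), ‖u τ‖ ≤ Mu) :
    MeasureTheory.IntegrableOn (fun τ => P.ell τ (x τ) (u τ)) (Set.Icc 0 T)
      MeasureTheory.volume := by
  obtain ⟨Cr, hCr⟩ := P.r_bdd
  obtain ⟨Cp, hCp⟩ := P.p_bdd
  have hQx : AEMeasurable (fun τ => P.Q.mulVec (x τ))
      (MeasureTheory.volume.restrict (Set.Icc (0:ℝ) T)) :=
    (meas_mulVec' (M := fun _ : Fin n → ℝ => P.Q) (fun i j => measurable_const)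
      measurable_id).comp_aemeasurable hx
  have hSx : AEMeasurable (fun τ => P.S.mulVec (x τ))
      (MeasureTheory.volume.restrict (Set.Icc (0:ℝ) T)) :=
    (meas_mulVec' (M := fun _ : Fin n → ℝ => P.S) (fun i j => measurable_const)
      measurable_id).comp_aemeasurable hx
  have hmeas : AEMeasurable (fun τ => P.ell τ (x τ) (u τ))
      (MeasureTheory.volume.restrict (Set.Icc (0:ℝ) T)) := by
    unfold DHNSetting.ell
    exact ((((aemeas_dot hx hQx).const_mul (1/2)).add (aemeas_dot hu hSx)).add
      (aemeas_dot hx P.r_meas.aemeasurable)).add (aemeas_dot hu P.p_meas.aemeasurable)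
  refine MeasureTheory.Integrable.mono'
    (g := fun _ => (n:ℝ) * matC P.Q * Mx * Mx + (m:ℝ) * matC P.S * Mu * Mx
      + (n:ℝ) * Mx * Cr + (m:ℝ) * Mu * Cp)
    ((MeasureTheory.integrableOn_const_iff).mpr (Or.inr measure_Icc_lt_top))
    hmeas.aestronglyMeasurable ?_
  filter_upwards [hxb, hub, MeasureTheory.ae_restrict_mem measurableSet_Icc] with τ h1 h2 h3
  rw [Real.norm_eq_abs]
  exact abs_ell_le P τ (x τ) (u τ) h1 h2 (hCr τ h3.1) (hCp τ h3.1)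

end Helpers

set_option maxHeartbeats 1000000 in
/-- **Proposition 2: strict dissipativity plus exponential
reachability implies the time-varying measure turnpike property.** In the DHN
optimal control setting with bounded reference pair `z̄ = (x̄, ū)`, assume
(i) strict dissipativity with storage function `St` bounded on `{0} × X₀`, and
(ii) exponential reachability of `z̄`. Then there is `ν : (0,∞) → [0,∞)` such
that for all `x₀ ∈ X₀`, all `T > 0`, all optimal pairs `z*_T` and all `ε > 0`,
`μ(Θ_T(ε)) = μ{τ ∈ [0,T] : ‖z*_T(τ) - z̄(τ)‖ > ε} ≤ ν(ε) < ∞`. -/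
theorem strict_dissipativity_implies_measure_turnpike
    {n m w : ℕ} (P : DHNSetting n m w)
    (xbar : ℝ → Fin n → ℝ) (ubar : ℝ → Fin m → ℝ)
    (href : P.IsReferencePair xbar ubar)
    (hbar_bdd : ∃ C, ∀ τ : ℝ, 0 ≤ τ → ‖(xbar τ, ubar τ)‖ ≤ C)
    -- (i) strict dissipativity with respect to `z̄`
    (α : ℝ → ℝ) (hα : IsClassK α)
    (s : ℝ) (hs : 0 ≤ s)
    (St : ℝ → (Fin n → ℝ) → ℝ) (hSt_lb : ∀ t x, s ≤ St t x)
    (hSt_bdd : ∃ Smax, ∀ x₀ ∈ P.X₀, St 0 x₀ ≤ Smax)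
    (hdiss : ∀ x₀ ∈ P.X₀, ∀ T : ℝ, 0 ≤ T → ∀ u, P.IsOptimal T x₀ u →
      St T (P.traj u x₀ T) - St 0 x₀ ≤
        ∫ τ in (0:ℝ)..T,
          (P.ell τ (P.traj u x₀ τ) (u τ) - P.ell τ (xbar τ) (ubar τ)
            - α ‖(P.traj u x₀ τ - xbar τ, u τ - ubar τ)‖))
    -- (ii) exponential reachability of `z̄`
    (hreach : ∃ c₁ > (0:ℝ), ∃ c₂ > (0:ℝ), ∀ x₀ ∈ P.X₀,
      ∃ u : ℝ → Fin m → ℝ, Measurable u ∧ (∀ τ : ℝ, 0 ≤ τ → u τ ∈ P.U) ∧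
        ∀ τ : ℝ, 0 ≤ τ →
          ‖(P.traj u x₀ τ - xbar τ, u τ - ubar τ)‖ ≤ c₁ * Real.exp (-c₂ * τ)) :
    ∃ ν : ℝ → ℝ, (∀ ε > (0:ℝ), 0 ≤ ν ε) ∧
      ∀ x₀ ∈ P.X₀, ∀ T > (0:ℝ), ∀ u, P.IsOptimal T x₀ u → ∀ ε > (0:ℝ),
        MeasureTheory.volume
            {τ ∈ Set.Icc (0:ℝ) T |
              ε < ‖(P.traj u x₀ τ - xbar τ, u τ - ubar τ)‖} ≤
          ENNReal.ofReal (ν ε) := by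
  
  classical
  obtain ⟨Cb, hCb⟩ := hbar_bdd
  obtain ⟨Smax, hSmax⟩ := hSt_bdd
  obtain ⟨c₁, hc₁, c₂, hc₂, hreach⟩ := hreach
  obtain ⟨Cr, hCr⟩ := P.r_bdd
  obtain ⟨Cp, hCp⟩ := P.p_bdd
  have hCb0 : 0 ≤ Cb := (norm_nonneg _).trans (hCb 0 le_rfl)
  have hCr0 : 0 ≤ Cr := (norm_nonneg _).trans (hCr 0 le_rfl)
  have hCp0 : 0 ≤ Cp := (norm_nonneg _).trans (hCp 0 le_rfl)
  set CU : ℝ := max ‖P.umin‖ ‖P.umax‖ with hCU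
  have hCU0 : 0 ≤ CU := le_max_of_le_left (norm_nonneg _)
  set M : ℝ := Cb + c₁ with hM
  have hM0 : 0 ≤ M := add_nonneg hCb0 hc₁.le
  set Lc : ℝ := (n:ℝ) * matC P.Q * M + 2 * ((m:ℝ) * matC P.S * M) + (n:ℝ) * Cr + (m:ℝ) * Cp
    with hLc
  have hLc0 : 0 ≤ Lc := by
    have h1 := matC_nonneg P.Q
    have h2 := matC_nonneg P.S
    have h3 : (0:ℝ) ≤ (n:ℝ) := Nat.cast_nonneg n
    have h4 : (0:ℝ) ≤ (m:ℝ) := Nat.cast_nonneg m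
    have : 0 ≤ (n:ℝ) * matC P.Q * M := mul_nonneg (mul_nonneg h3 h1) hM0
    have : 0 ≤ (m:ℝ) * matC P.S * M := mul_nonneg (mul_nonneg h4 h2) hM0
    have : 0 ≤ (n:ℝ) * Cr := mul_nonneg h3 hCr0
    have : 0 ≤ (m:ℝ) * Cp := mul_nonneg h4 hCp0
    rw [hLc]; linarith
  set K : ℝ := Lc * c₁ / c₂ + (Smax - s) with hK
  have hαmono : MonotoneOn α (Set.Ici 0) := hα.2.1.monotoneOn
  have hα0 : ∀ t : ℝ, 0 ≤ t → 0 ≤ α t := fun t ht => by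
    have := hαmono (Set.mem_Ici.mpr le_rfl) (Set.mem_Ici.mpr ht) ht
    rwa [hα.2.2] at this
  refine ⟨fun ε => max (K / α ε) 0, fun ε _ => le_max_right _ _, ?_⟩
  intro x₀ hx₀ T hT u hopt ε hε
  set μr := MeasureTheory.volume.restrict (Set.Icc (0:ℝ) T) with hμr
  -- admissibility facts for the optimal control
  obtain ⟨hu_meas, hu_ae⟩ := hopt.1
  have hub : ∀ᵐ τ ∂μr, ‖u τ‖ ≤ CU := hu_ae.mono fun τ h => norm_le_of_memU P h
  -- the optimal trajectory
  have hxc : ContinuousOn (P.traj u x₀) (Set.Icc 0 T) :=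
    traj_contOn P hu_meas hT.le hCU0 hub x₀
  obtain ⟨Cx, hCx⟩ := isCompact_Icc.exists_bound_of_continuousOn hxc
  have hCx0 : 0 ≤ Cx := (norm_nonneg _).trans (hCx 0 ⟨le_rfl, hT.le⟩)
  have hxmeas : AEMeasurable (P.traj u x₀) μr := hxc.aemeasurable measurableSet_Icc
  have hxb : ∀ᵐ τ ∂μr, ‖P.traj u x₀ τ‖ ≤ Cx :=
    (MeasureTheory.ae_restrict_mem measurableSet_Icc).mono fun τ h => hCx τ h
  -- reference pair facts
  have hubar_meas := href.1
  have hubarU := href.2.1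
  have hxbar_traj := href.2.2
  have hxbarb : ∀ τ : ℝ, 0 ≤ τ → ‖xbar τ‖ ≤ Cb := fun τ hτ =>
    (norm_fst_le (xbar τ, ubar τ)).trans (hCb τ hτ)
  have hubarb : ∀ τ : ℝ, 0 ≤ τ → ‖ubar τ‖ ≤ Cb := fun τ hτ =>
    (norm_snd_le (xbar τ, ubar τ)).trans (hCb τ hτ)
  have hubarb' : ∀ᵐ τ ∂μr, ‖ubar τ‖ ≤ Cb :=
    (MeasureTheory.ae_restrict_mem measurableSet_Icc).mono fun τ h => hubarb τ h.1
  have hxbarc : ContinuousOn (P.traj ubar (xbar 0)) (Set.Icc 0 T) :=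
    traj_contOn P hubar_meas hT.le hCb0 hubarb' (xbar 0)
  have hxbar_ae : ∀ᵐ τ ∂μr, xbar τ = P.traj ubar (xbar 0) τ :=
    (MeasureTheory.ae_restrict_mem measurableSet_Icc).mono fun τ h => hxbar_traj τ h.1
  have hxbar_meas : AEMeasurable xbar μr :=
    (hxbarc.aemeasurable measurableSet_Icc).congr (hxbar_ae.mono fun τ h => h.symm)
  have hxbarb_ae : ∀ᵐ τ ∂μr, ‖xbar τ‖ ≤ Cb :=
    (MeasureTheory.ae_restrict_mem measurableSet_Icc).mono fun τ h => hxbarb τ h.1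
  -- the reachable pair
  obtain ⟨ur, hur_meas, hurU, hur_close⟩ := hreach x₀ hx₀
  have hurb : ∀ᵐ τ ∂μr, ‖ur τ‖ ≤ CU :=
    (MeasureTheory.ae_restrict_mem measurableSet_Icc).mono fun τ h =>
      norm_le_of_memU P (hurU τ h.1)
  have hadm_r : P.Admissible T ur :=
    ⟨hur_meas, (MeasureTheory.ae_restrict_mem measurableSet_Icc).mono fun τ h => hurU τ h.1⟩
  have hxrc : ContinuousOn (P.traj ur x₀) (Set.Icc 0 T) :=
    traj_contOn P hur_meas hT.le hCU0 hurb x₀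
  have hxrmeas : AEMeasurable (P.traj ur x₀) μr := hxrc.aemeasurable measurableSet_Icc
  have hexp1 : ∀ τ : ℝ, 0 ≤ τ → c₁ * Real.exp (-c₂ * τ) ≤ c₁ := by
    intro τ hτ
    have h1 : Real.exp (-c₂ * τ) ≤ Real.exp 0 := Real.exp_le_exp.mpr (by nlinarith)
    rw [Real.exp_zero] at h1
    nlinarith [Real.exp_pos (-c₂ * τ)]
  have hxr_b : ∀ τ : ℝ, 0 ≤ τ → ‖P.traj ur x₀ τ‖ ≤ M := by
    intro τ hτ
    have h1 : ‖P.traj ur x₀ τ - xbar τ‖ ≤ c₁ :=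
      (norm_fst_le (P.traj ur x₀ τ - xbar τ, ur τ - ubar τ)).trans
        ((hur_close τ hτ).trans (hexp1 τ hτ))
    have h2 := norm_add_le (P.traj ur x₀ τ - xbar τ) (xbar τ)
    simp only [sub_add_cancel] at h2
    have h3 := hxbarb τ hτ
    rw [hM]; linarith
  have hur_b : ∀ τ : ℝ, 0 ≤ τ → ‖ur τ‖ ≤ M := by
    intro τ hτ
    have h1 : ‖ur τ - ubar τ‖ ≤ c₁ :=
      (norm_snd_le (P.traj ur x₀ τ - xbar τ, ur τ - ubar τ)).trans
        ((hur_close τ hτ).trans (hexp1 τ hτ))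
    have h2 := norm_add_le (ur τ - ubar τ) (ubar τ)
    simp only [sub_add_cancel] at h2
    have h3 := hubarb τ hτ
    rw [hM]; linarith
  have hxrb_ae : ∀ᵐ τ ∂μr, ‖P.traj ur x₀ τ‖ ≤ M :=
    (MeasureTheory.ae_restrict_mem measurableSet_Icc).mono fun τ h => hxr_b τ h.1
  have hurb_ae : ∀ᵐ τ ∂μr, ‖ur τ‖ ≤ M :=
    (MeasureTheory.ae_restrict_mem measurableSet_Icc).mono fun τ h => hur_b τ h.1
  -- integrability of the four integrands
  have Istar : MeasureTheory.IntegrableOn (fun τ => P.ell τ (P.traj u x₀ τ) (u τ))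
      (Set.Icc 0 T) MeasureTheory.volume :=
    ell_integrableOn P hT.le hxmeas hu_meas.aemeasurable hxb hub
  have Ir : MeasureTheory.IntegrableOn (fun τ => P.ell τ (P.traj ur x₀ τ) (ur τ))
      (Set.Icc 0 T) MeasureTheory.volume :=
    ell_integrableOn P hT.le hxrmeas hur_meas.aemeasurable hxrb_ae hurb_ae
  have Ibar : MeasureTheory.IntegrableOn (fun τ => P.ell τ (xbar τ) (ubar τ))
      (Set.Icc 0 T) MeasureTheory.volume := by
    have hb : ∀ᵐ τ ∂μr, ‖P.traj ubar (xbar 0) τ‖ ≤ Cb := by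
      filter_upwards [hxbar_ae, hxbarb_ae] with τ h1 h2
      rw [← h1]; exact h2
    have h1 := ell_integrableOn P hT.le (hxbarc.aemeasurable measurableSet_Icc)
      hubar_meas.aemeasurable hb hubarb'
    exact h1.congr_fun (fun τ hτ => by rw [hxbar_traj τ hτ.1]) measurableSet_Icc
  -- integrability of the α-term
  have hgmeas : AEMeasurable (fun τ => ‖(P.traj u x₀ τ - xbar τ, u τ - ubar τ)‖) μr :=
    ((hxmeas.sub hxbar_meas).prodMk
      (hu_meas.aemeasurable.sub hubar_meas.aemeasurable)).norm
  set β : ℝ → ℝ := fun t => α (max t 0) with hβ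
  have hβmono : Monotone β := fun a b hab =>
    hαmono (Set.mem_Ici.mpr (le_max_right _ _)) (Set.mem_Ici.mpr (le_max_right _ _))
      (max_le_max hab le_rfl)
  have hfβ : ∀ τ, α ‖(P.traj u x₀ τ - xbar τ, u τ - ubar τ)‖
      = β ‖(P.traj u x₀ τ - xbar τ, u τ - ubar τ)‖ := fun τ => by
    rw [hβ]; simp [max_eq_left (norm_nonneg _)]
  have hfmeas : AEMeasurable (fun τ => α ‖(P.traj u x₀ τ - xbar τ, u τ - ubar τ)‖) μr := by
    have : (fun τ => α ‖(P.traj u x₀ τ - xbar τ, u τ - ubar τ)‖)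
        = fun τ => β ‖(P.traj u x₀ τ - xbar τ, u τ - ubar τ)‖ := funext hfβ
    rw [this]
    exact hβmono.measurable.comp_aemeasurable hgmeas
  have hgb : ∀ᵐ τ ∂μr, ‖(P.traj u x₀ τ - xbar τ, u τ - ubar τ)‖ ≤ Cx + CU + 2*Cb := by
    filter_upwards [hxb, hub, hxbarb_ae, hubarb'] with τ a b c d
    rw [Prod.norm_def]
    apply max_le
    · have := norm_sub_le (P.traj u x₀ τ) (xbar τ); linarith
    · have := norm_sub_le (u τ) (ubar τ); linarith
  have If : MeasureTheory.IntegrableOn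
      (fun τ => α ‖(P.traj u x₀ τ - xbar τ, u τ - ubar τ)‖) (Set.Icc 0 T)
      MeasureTheory.volume := by
    refine MeasureTheory.Integrable.mono' (g := fun _ => β (Cx + CU + 2*Cb))
      ((MeasureTheory.integrableOn_const_iff).mpr (Or.inr measure_Icc_lt_top))
      hfmeas.aestronglyMeasurable ?_
    filter_upwards [hgb] with τ h
    rw [Real.norm_eq_abs, abs_of_nonneg (hα0 _ (norm_nonneg _)), hfβ]
    exact hβmono h
  -- interval-integrable versions
  have toII : ∀ {φ : ℝ → ℝ}, MeasureTheory.IntegrableOn φ (Set.Icc 0 T) MeasureTheory.volume →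
      IntervalIntegrable φ MeasureTheory.volume 0 T := fun {φ} h => by
    rw [← Set.uIcc_of_le hT.le] at h
    exact h.intervalIntegrable
  -- dissipativity, split
  have hd := hdiss x₀ hx₀ T hT.le u hopt
  have hsplit : (∫ τ in (0:ℝ)..T,
        (P.ell τ (P.traj u x₀ τ) (u τ) - P.ell τ (xbar τ) (ubar τ)
          - α ‖(P.traj u x₀ τ - xbar τ, u τ - ubar τ)‖))
      = (∫ τ in (0:ℝ)..T, P.ell τ (P.traj u x₀ τ) (u τ))
        - (∫ τ in (0:ℝ)..T, P.ell τ (xbar τ) (ubar τ))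
        - ∫ τ in (0:ℝ)..T, α ‖(P.traj u x₀ τ - xbar τ, u τ - ubar τ)‖ := by
    rw [intervalIntegral.integral_sub ((toII Istar).sub (toII Ibar)) (toII If),
      intervalIntegral.integral_sub (toII Istar) (toII Ibar)]
  rw [hsplit] at hd
  have hlow : s - Smax ≤ St T (P.traj u x₀ T) - St 0 x₀ := by
    have h1 := hSt_lb T (P.traj u x₀ T)
    have h2 := hSmax x₀ hx₀
    linarith
  -- optimality against the reachable control
  have hopt2 : (∫ τ in (0:ℝ)..T, P.ell τ (P.traj u x₀ τ) (u τ))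
      ≤ ∫ τ in (0:ℝ)..T, P.ell τ (P.traj ur x₀ τ) (ur τ) := hopt.2 ur hadm_r
  -- exponential turnpike-cost estimate for the reachable pair
  have hptw : ∀ τ ∈ Set.Icc (0:ℝ) T,
      P.ell τ (P.traj ur x₀ τ) (ur τ) - P.ell τ (xbar τ) (ubar τ)
        ≤ (Lc * c₁) * Real.exp (-c₂ * τ) := by
    intro τ hτ
    have h1 := ell_diff_le P τ (P.traj ur x₀ τ) (xbar τ) (ur τ) (ubar τ)
      (hxr_b τ hτ.1) ((hxbarb τ hτ.1).trans (by rw [hM]; linarith))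
      (hur_b τ hτ.1) ((hubarb τ hτ.1).trans (by rw [hM]; linarith))
      (hCr τ hτ.1) (hCp τ hτ.1)
    have h2 := hur_close τ hτ.1
    calc P.ell τ (P.traj ur x₀ τ) (ur τ) - P.ell τ (xbar τ) (ubar τ)
        ≤ Lc * ‖(P.traj ur x₀ τ - xbar τ, ur τ - ubar τ)‖ := h1
      _ ≤ Lc * (c₁ * Real.exp (-c₂ * τ)) := mul_le_mul_of_nonneg_left h2 hLc0
      _ = (Lc * c₁) * Real.exp (-c₂ * τ) := by ring
  have hexpII : IntervalIntegrable (fun τ => (Lc * c₁) * Real.exp (-c₂ * τ))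
      MeasureTheory.volume 0 T :=
    (continuous_const.mul
      (Real.continuous_exp.comp (continuous_const.mul continuous_id))).intervalIntegrable 0 T
  have hmono := intervalIntegral.integral_mono_on hT.le ((toII Ir).sub (toII Ibar))
    hexpII hptw
  have hsub2 : (∫ τ in (0:ℝ)..T,
        (P.ell τ (P.traj ur x₀ τ) (ur τ) - P.ell τ (xbar τ) (ubar τ)))
      = (∫ τ in (0:ℝ)..T, P.ell τ (P.traj ur x₀ τ) (ur τ))
        - ∫ τ in (0:ℝ)..T, P.ell τ (xbar τ) (ubar τ) :=
    intervalIntegral.integral_sub (toII Ir) (toII Ibar)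
  rw [hsub2] at hmono
  -- the exponential integral is at most `c₂⁻¹`
  have hder : ∀ t ∈ Set.uIcc (0:ℝ) T,
      HasDerivAt (fun τ => -(c₂⁻¹ * Real.exp (-c₂ * τ))) (Real.exp (-c₂ * t)) t := by
    intro t _
    have h1 : HasDerivAt (fun τ : ℝ => -c₂ * τ) (-c₂) t := by
      simpa using (hasDerivAt_id t).const_mul (-c₂)
    have h2 := h1.exp
    have h3 := (h2.const_mul (c₂⁻¹)).neg
    have e : -(c₂⁻¹ * (Real.exp (-c₂ * t) * -c₂)) = Real.exp (-c₂ * t) := by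
      rw [mul_neg, mul_neg, neg_neg, mul_left_comm, inv_mul_cancel₀ hc₂.ne', mul_one]
    rw [e] at h3
    exact h3
  have hexpint : (∫ τ in (0:ℝ)..T, Real.exp (-c₂ * τ))
      = -(c₂⁻¹ * Real.exp (-c₂ * T)) - -(c₂⁻¹ * Real.exp (-c₂ * 0)) :=
    intervalIntegral.integral_eq_sub_of_hasDerivAt hder
      ((Real.continuous_exp.comp (continuous_const.mul continuous_id)).intervalIntegrable 0 T)
  have hexple : (∫ τ in (0:ℝ)..T, Real.exp (-c₂ * τ)) ≤ c₂⁻¹ := by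
    rw [hexpint]
    have h1 : Real.exp (-c₂ * 0) = 1 := by norm_num
    rw [h1]
    nlinarith [Real.exp_pos (-c₂ * T), inv_pos.mpr hc₂]
  have hpull : (∫ τ in (0:ℝ)..T, (Lc * c₁) * Real.exp (-c₂ * τ))
      = (Lc * c₁) * ∫ τ in (0:ℝ)..T, Real.exp (-c₂ * τ) :=
    intervalIntegral.integral_const_mul _ _
  -- combine: the α-integral is at most K
  have hfK : (∫ τ in (0:ℝ)..T, α ‖(P.traj u x₀ τ - xbar τ, u τ - ubar τ)‖) ≤ K := by
    have e1 : (Lc * c₁) * (∫ τ in (0:ℝ)..T, Real.exp (-c₂ * τ)) ≤ (Lc * c₁) * c₂⁻¹ :=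
      mul_le_mul_of_nonneg_left hexple (mul_nonneg hLc0 hc₁.le)
    have e2 : Lc * c₁ / c₂ = (Lc * c₁) * c₂⁻¹ := div_eq_mul_inv _ _
    rw [hK, e2]
    rw [hpull] at hmono
    have t1 : (∫ τ in (0:ℝ)..T, α ‖(P.traj u x₀ τ - xbar τ, u τ - ubar τ)‖)
        ≤ ((∫ τ in (0:ℝ)..T, P.ell τ (P.traj u x₀ τ) (u τ))
           - ∫ τ in (0:ℝ)..T, P.ell τ (xbar τ) (ubar τ)) - (s - Smax) := by
      linarith [hd, hlow]
    have t2 : ((∫ τ in (0:ℝ)..T, P.ell τ (P.traj u x₀ τ) (u τ))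
           - ∫ τ in (0:ℝ)..T, P.ell τ (xbar τ) (ubar τ))
        ≤ Lc * c₁ * c₂⁻¹ := by
      have t3 := le_trans hmono e1
      have t4 := le_trans (sub_le_sub_right hopt2 (∫ τ in (0:ℝ)..T, P.ell τ (xbar τ) (ubar τ))) t3
      exact t4
    linarith [t1, t2]
  -- Markov's inequality
  have hnonneg : 0 ≤ᵐ[μr] fun τ => α ‖(P.traj u x₀ τ - xbar τ, u τ - ubar τ)‖ :=
    MeasureTheory.ae_of_all _ fun τ => hα0 _ (norm_nonneg _)
  have markov := MeasureTheory.mul_meas_ge_le_integral_of_nonneg hnonneg If (α ε)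
  beta_reduce at markov
  have hIcceq : (∫ τ, α ‖(P.traj u x₀ τ - xbar τ, u τ - ubar τ)‖ ∂μr)
      = ∫ τ in (0:ℝ)..T, α ‖(P.traj u x₀ τ - xbar τ, u τ - ubar τ)‖ := by
    rw [hμr, intervalIntegral.integral_of_le hT.le,
      ← MeasureTheory.integral_Icc_eq_integral_Ioc]
  rw [hIcceq] at markov
  have hαε : 0 < α ε := by
    have := hα.2.1 (Set.mem_Ici.mpr le_rfl) (Set.mem_Ici.mpr hε.le) hε
    rwa [hα.2.2] at this
  set Sset : Set ℝ := {τ | α ε ≤ α ‖(P.traj u x₀ τ - xbar τ, u τ - ubar τ)‖} with hSset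
  have hsub : {τ ∈ Set.Icc (0:ℝ) T | ε < ‖(P.traj u x₀ τ - xbar τ, u τ - ubar τ)‖}
      ⊆ Sset ∩ Set.Icc 0 T := by
    intro τ hτ
    obtain ⟨h1, h2⟩ := hτ
    refine ⟨?_, h1⟩
    exact (hα.2.1 (Set.mem_Ici.mpr hε.le) (Set.mem_Ici.mpr (norm_nonneg _)) h2).le
  have hmeasle : MeasureTheory.volume
      {τ ∈ Set.Icc (0:ℝ) T | ε < ‖(P.traj u x₀ τ - xbar τ, u τ - ubar τ)‖} ≤ μr Sset := by
    rw [hμr, MeasureTheory.Measure.restrict_apply' measurableSet_Icc]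
    exact MeasureTheory.measure_mono hsub
  have hfin : μr Sset ≠ ⊤ := by
    refine ne_of_lt (lt_of_le_of_lt (MeasureTheory.measure_mono (Set.subset_univ _)) ?_)
    rw [hμr, MeasureTheory.Measure.restrict_apply_univ]
    exact measure_Icc_lt_top
  have htoReal : (μr Sset).toReal ≤ K / α ε := by
    rw [le_div_iff₀ hαε]
    calc (μr Sset).toReal * α ε = α ε * (μr Sset).toReal := mul_comm _ _
      _ ≤ ∫ τ in (0:ℝ)..T, α ‖(P.traj u x₀ τ - xbar τ, u τ - ubar τ)‖ := markov
      _ ≤ K := hfK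
  refine le_trans hmeasle ?_
  rw [← ENNReal.ofReal_toReal hfin]
  exact ENNReal.ofReal_le_ofReal (htoReal.trans (le_max_left _ _))
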